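/- Let n, n' and m be nonnegative integers such that n+m and n'+m are both even and n ≥ n'. Then the partisan chocolate game position PC(n,m) is greater than or equal to PC(n',m) in the normal-play game order. -/

import Mathlib

universe u

namespace SetTheory

/-- Pre-games (removed from Mathlib; restored with the old definition). -/
inductive PGame : Type (u + 1)
  | mk : ∀ α β : Type u, (α → PGame) → (β → PGame) → PGame

namespace PGame

/-- The type of Left moves. -/
def LeftMoves : PGame.{u} → Type u
  | mk l _ _ _ => l

/-- The type of Right moves. -/
def RightMoves : PGame.{u} → Type u
  | mk _ r _ _ => r

/-- Left move. -/
def moveLeft : ∀ g : PGame.{u}, LeftMoves g → PGame.{u}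
  | mk _ _ L _ => L

/-- Right move. -/
def moveRight : ∀ g : PGame.{u}, RightMoves g → PGame.{u}
  | mk _ _ _ R => R

mutual
/-- `x ≤ y`: every Left move of `x` is `⧏ y`, and `x ⧏` every Right move of `y`. -/
inductive Le : PGame.{u} → PGame.{u} → Prop
  | intro {x y : PGame.{u}} : (∀ i, LF (x.moveLeft i) y) → (∀ j, LF x (y.moveRight j)) → Le x y
/-- `x ⧏ y`: some Left move of `y` is `≥ x`, or some Right move of `x` is `≤ y`. -/
inductive LF : PGame.{u} → PGame.{u} → Prop
  | left {x y : PGame.{u}} (i : y.LeftMoves) : Le x (y.moveLeft i) → LF x y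
  | right {x y : PGame.{u}} (j : x.RightMoves) : Le (x.moveRight j) y → LF x y
end

instance : LE PGame.{u} := ⟨Le⟩

end PGame

end SetTheory

open SetTheory
open SetTheory.PGame

infix:50 " ⧏ " => SetTheory.PGame.LF

theorem SetTheory.PGame.lf_of_le_moveLeft {x y : PGame} {i : y.LeftMoves}
    (h : x ≤ y.moveLeft i) : x ⧏ y := LF.left i h

theorem SetTheory.PGame.lf_of_moveRight_le {x y : PGame} {j : x.RightMoves}
    (h : x.moveRight j ≤ y) : x ⧏ y := LF.right j h

theorem SetTheory.PGame.le_iff_forall_lf {x y : PGame} :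
    x ≤ y ↔ (∀ i, x.moveLeft i ⧏ y) ∧ ∀ j, x ⧏ y.moveRight j := by
  constructor
  · intro h
    cases h with
    | intro a b => exact ⟨a, b⟩
  · rintro ⟨a, b⟩
    exact Le.intro a b

/-- The partisan chocolate game position `PC n m`.
Left options: `PC n' m` with `n' < n` and `n' + m` even, and `PC n m'` with `m' < m` and
`n + m'` even. Right options: the same with "odd" in place of "even". -/
def PC : ℕ → ℕ → SetTheory.PGame
  | n, m =>
    SetTheory.PGame.mk
      {p : ℕ × ℕ // (p.2 = m ∧ p.1 < n ∧ Even (p.1 + m)) ∨ (p.1 = n ∧ p.2 < m ∧ Even (n + p.2))}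
      {p : ℕ × ℕ // (p.2 = m ∧ p.1 < n ∧ Odd (p.1 + m)) ∨ (p.1 = n ∧ p.2 < m ∧ Odd (n + p.2))}
      (fun p => PC p.1.1 p.1.2)
      (fun p => PC p.1.1 p.1.2)
termination_by n m => n + m
decreasing_by
  all_goals rcases p.2 with ⟨h1, h2, -⟩ | ⟨h1, h2, -⟩ <;> omega

theorem PC_eq (n m : ℕ) : PC n m =
    SetTheory.PGame.mk
      {p : ℕ × ℕ // (p.2 = m ∧ p.1 < n ∧ Even (p.1 + m)) ∨ (p.1 = n ∧ p.2 < m ∧ Even (n + p.2))}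
      {p : ℕ × ℕ // (p.2 = m ∧ p.1 < n ∧ Odd (p.1 + m)) ∨ (p.1 = n ∧ p.2 < m ∧ Odd (n + p.2))}
      (fun p => PC p.1.1 p.1.2)
      (fun p => PC p.1.1 p.1.2) := by
  rw [PC]

/-- The "weight" of a position: the canonical value of `PC a b` is an increasing (for even
weights) resp. decreasing (for odd weights) function of the weight. -/
def W (a b : ℕ) : ℕ := if a % 2 = 1 ∧ b % 2 = 1 then a + b - 2 else a + b

lemma W_cases (a b : ℕ) :
    (W a b = a + b - 2 ∧ a % 2 = 1 ∧ b % 2 = 1) ∨ (W a b = a + b ∧ ¬(a % 2 = 1 ∧ b % 2 = 1)) := by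
  unfold W; split_ifs with h
  · exact Or.inl ⟨rfl, h.1, h.2⟩
  · exact Or.inr ⟨rfl, h⟩

/-- The main induction statement, bounded by total size `T`. -/
def Key (T : ℕ) : Prop := ∀ p q s t : ℕ, p + q + s + t < T →
    ((Even (p + q) ∧ Even (s + t) ∧ W p q ≤ W s t) ∨
     (Odd (p + q) ∧ Odd (s + t) ∧ s + t ≤ p + q) ∨
     (Even (p + q) ∧ Odd (s + t))) → PC p q ≤ PC s t

lemma lf_left {x : PGame} {s t a b : ℕ}
    (h : (b = t ∧ a < s ∧ Even (a + t)) ∨ (a = s ∧ b < t ∧ Even (s + b)))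
    (hx : x ≤ PC a b) : x ⧏ PC s t := by
  rw [PC_eq s t]
  exact PGame.lf_of_le_moveLeft (i := ⟨(a, b), h⟩) hx

lemma lf_right {x : PGame} {p q a b : ℕ}
    (h : (b = q ∧ a < p ∧ Odd (a + q)) ∨ (a = p ∧ b < q ∧ Odd (p + b)))
    (hx : PC a b ≤ x) : PC p q ⧏ x := by
  rw [PC_eq p q]
  exact PGame.lf_of_moveRight_le (j := ⟨(a, b), h⟩) hx

lemma PC_le_intro {p q s t : ℕ}
    (h1 : ∀ a b : ℕ, (b = q ∧ a < p ∧ Even (a + q)) ∨ (a = p ∧ b < q ∧ Even (p + b)) →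
      PC a b ⧏ PC s t)
    (h2 : ∀ a b : ℕ, (b = t ∧ a < s ∧ Odd (a + t)) ∨ (a = s ∧ b < t ∧ Odd (s + b)) →
      PC p q ⧏ PC a b) :
    PC p q ≤ PC s t := by
  rw [PGame.le_iff_forall_lf]
  constructor
  · rw [PC_eq p q]
    rintro ⟨⟨a, b⟩, hab⟩
    exact h1 a b hab
  · rw [PC_eq s t]
    rintro ⟨⟨a, b⟩, hab⟩
    exact h2 a b hab

/-- even-weight positions are `⧏` odd-weight positions, unconditionally. -/
lemma CL {p q s t : ℕ} (H : Key (p + q + s + t)) (hE : Even (p + q)) (hO : Odd (s + t)) :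
    PC p q ⧏ PC s t := by
  rw [Nat.even_iff] at hE
  rw [Nat.odd_iff] at hO
  rcases lt_or_ge (W p q) (s + t) with hlt | hge
  · -- move to a Left option of (s,t) of weight s+t-1 ≥ W p q
    by_cases ht : t % 2 = 1
    · refine lf_left (a := s) (b := t - 1) (Or.inr ⟨rfl, by omega, by rw [Nat.even_iff]; omega⟩) ?_
      refine H p q s (t - 1) (by omega) (Or.inl ⟨by rw [Nat.even_iff]; omega,
        by rw [Nat.even_iff]; omega, ?_⟩)
      have w2 := W_cases s (t - 1)
      omega
    · refine lf_left (a := s - 1) (b := t) (Or.inl ⟨rfl, by omega, by rw [Nat.even_iff]; omega⟩) ?_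
      refine H p q (s - 1) t (by omega) (Or.inl ⟨by rw [Nat.even_iff]; omega,
        by rw [Nat.even_iff]; omega, ?_⟩)
      have w2 := W_cases (s - 1) t
      omega
  · -- W p q ≥ s+t+1 by parity; move to a Right option of (p,q) of weight ≥ s+t
    have w1 := W_cases p q
    by_cases hp : 0 < p
    · refine lf_right (a := p - 1) (b := q) (Or.inl ⟨rfl, by omega, by rw [Nat.odd_iff]; omega⟩) ?_
      exact H (p - 1) q s t (by omega) (Or.inr (Or.inl ⟨by rw [Nat.odd_iff]; omega,
        by rw [Nat.odd_iff]; omega, by omega⟩))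
    · have hq : 0 < q := by omega
      refine lf_right (a := p) (b := q - 1) (Or.inr ⟨rfl, by omega, by rw [Nat.odd_iff]; omega⟩) ?_
      exact H p (q - 1) s t (by omega) (Or.inr (Or.inl ⟨by rw [Nat.odd_iff]; omega,
        by rw [Nat.odd_iff]; omega, by omega⟩))

/-- among even-weight positions, strictly smaller weight gives `⧏`. -/
lemma EL {p q s t : ℕ} (H : Key (p + q + s + t)) (hE : Even (p + q)) (hE' : Even (s + t))
    (hlt : W p q < W s t) : PC p q ⧏ PC s t := by
  rw [Nat.even_iff] at hE hE'
  have w1 := W_cases p q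
  have w2 := W_cases s t
  by_cases hs : 2 ≤ s
  · have w3 := W_cases (s - 2) t
    refine lf_left (a := s - 2) (b := t) (Or.inl ⟨rfl, by omega, by rw [Nat.even_iff]; omega⟩) ?_
    exact H p q (s - 2) t (by omega) (Or.inl ⟨by rw [Nat.even_iff]; omega,
      by rw [Nat.even_iff]; omega, by omega⟩)
  · have ht : 2 ≤ t := by omega
    have w3 := W_cases s (t - 2)
    refine lf_left (a := s) (b := t - 2) (Or.inr ⟨rfl, by omega, by rw [Nat.even_iff]; omega⟩) ?_
    exact H p q s (t - 2) (by omega) (Or.inl ⟨by rw [Nat.even_iff]; omega,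
      by rw [Nat.even_iff]; omega, by omega⟩)

/-- among odd-weight positions, strictly larger weight gives `⧏`. -/
lemma OO {p q s t : ℕ} (H : Key (p + q + s + t)) (hO : Odd (p + q)) (hO' : Odd (s + t))
    (hlt : s + t < p + q) : PC p q ⧏ PC s t := by
  rw [Nat.odd_iff] at hO hO'
  have hst : s + t + 2 ≤ p + q := by omega
  by_cases hp : 2 ≤ p
  · refine lf_right (a := p - 2) (b := q) (Or.inl ⟨rfl, by omega, by rw [Nat.odd_iff]; omega⟩) ?_
    exact H (p - 2) q s t (by omega) (Or.inr (Or.inl ⟨by rw [Nat.odd_iff]; omega,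
      by rw [Nat.odd_iff]; omega, by omega⟩))
  · have hq : 2 ≤ q := by omega
    refine lf_right (a := p) (b := q - 2) (Or.inr ⟨rfl, by omega, by rw [Nat.odd_iff]; omega⟩) ?_
    exact H p (q - 2) s t (by omega) (Or.inr (Or.inl ⟨by rw [Nat.odd_iff]; omega,
      by rw [Nat.odd_iff]; omega, by omega⟩))

lemma key (T : ℕ) : Key T := by
  induction T using Nat.strong_induction_on with
  | _ T IH =>
    intro p q s t hT hcase
    apply PC_le_intro
    · rintro a b hab
      have hab' : Even (a + b) := by
        rcases hab with ⟨rfl, hh1, hh2⟩ | ⟨rfl, hh1, hh2⟩ <;> exact hh2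
      have habl : a + b < p + q := by
        rcases hab with ⟨rfl, hh1, hh2⟩ | ⟨rfl, hh1, hh2⟩ <;> omega
      rcases hcase with ⟨h1, h2, h3⟩ | ⟨h1, h2, h3⟩ | ⟨h1, h2⟩
      · refine EL (IH (a + b + s + t) (by omega)) hab' h2 ?_
        have w1 := W_cases a b
        have w2 := W_cases p q
        have w3 := W_cases s t
        rw [Nat.even_iff] at h1 h2 hab'
        rcases hab with ⟨rfl, hh1, hh2⟩ | ⟨rfl, hh1, hh2⟩ <;> rw [Nat.even_iff] at hh2 <;> omega
      · exact CL (IH (a + b + s + t) (by omega)) hab' h2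
      · exact CL (IH (a + b + s + t) (by omega)) hab' h2
    · rintro a b hab
      have hab' : Odd (a + b) := by
        rcases hab with ⟨rfl, hh1, hh2⟩ | ⟨rfl, hh1, hh2⟩ <;> exact hh2
      have habl : a + b < s + t := by
        rcases hab with ⟨rfl, hh1, hh2⟩ | ⟨rfl, hh1, hh2⟩ <;> omega
      rcases hcase with ⟨h1, h2, h3⟩ | ⟨h1, h2, h3⟩ | ⟨h1, h2⟩
      · exact CL (IH (p + q + a + b) (by omega)) h1 hab'
      · refine OO (IH (p + q + a + b) (by omega)) h1 hab' ?_
        rw [Nat.odd_iff] at h1 h2 hab'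
        rcases hab with ⟨rfl, hh1, hh2⟩ | ⟨rfl, hh1, hh2⟩ <;> rw [Nat.odd_iff] at hh2 <;> omega
      · exact CL (IH (p + q + a + b) (by omega)) h1 hab'

theorem stmt_1 (n n' m : ℕ) (hn : Even (n + m)) (hn' : Even (n' + m)) (h : n' ≤ n) :
    PC n' m ≤ PC n m := by
  refine key (n' + m + n + m + 1) n' m n m (by omega) (Or.inl ⟨hn', hn, ?_⟩)
  have w1 := W_cases n' m
  have w2 := W_cases n m
  rw [Nat.even_iff] at hn hn'
  omega
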